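/- Let B ⊂ ℝ^{d-1} be an open ball. There exists a constant C > 0, depending only on B and d, such that for every h > 0 and every function v that is continuously differentiable on an open neighborhood of the closure of the cylinder C_h = B × (−h, h) ⊂ ℝ^d, one has C·∫_{C_h} v(x)² dx ≤ h²·∫_{C_h} |∇v(x)|² dx + h·∫_B v(x̂, h)² dx̂, where the first two integrals are with respect to Lebesgue measure on ℝ^d, |∇v| is the Euclidean norm of the gradient, and the last integral is over the top face B × {h} with respect to Lebesgue measure on ℝ^{d-1}. -/

import Mathlib

open Metric Set MeasureTheory

noncomputable section

/-- `ℝ^n` with the Euclidean norm. -/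
abbrev Euc (n : ℕ) := EuclideanSpace ℝ (Fin n)

/-- The space `ℝ^{d-1} × ℝ` equipped with the Euclidean (l²) product structure, so that
`‖gradient v p‖` is the Euclidean norm of the gradient of `v` at `p`. -/
abbrev Pt (d : ℕ) := WithLp 2 (Euc (d - 1) × ℝ)

instance (d : ℕ) : MeasurableSpace (Pt d) := borel _
instance (d : ℕ) : BorelSpace (Pt d) := ⟨rfl⟩

/-- The point `(x, y) ∈ ℝ^{d-1} × ℝ`. -/
def toPt (d : ℕ) (x : Euc (d - 1)) (y : ℝ) : Pt d :=
  (WithLp.equiv 2 (Euc (d - 1) × ℝ)).symm (x, y)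

/-- First (horizontal) component of a point of `ℝ^{d-1} × ℝ`. -/
def fstPt (d : ℕ) (p : Pt d) : Euc (d - 1) := (WithLp.equiv 2 (Euc (d - 1) × ℝ) p).1

/-- Second (vertical) component of a point of `ℝ^{d-1} × ℝ`. -/
def sndPt (d : ℕ) (p : Pt d) : ℝ := (WithLp.equiv 2 (Euc (d - 1) × ℝ) p).2

/-- Lebesgue measure on `ℝ^d = ℝ^{d-1} × ℝ`, transported through the canonical
identification. -/
def lebPt (d : ℕ) : Measure (Pt d) :=
  Measure.map (WithLp.equiv 2 (Euc (d - 1) × ℝ)).symm volume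

/-- The flat open cylinder `B × (-h, h)` over the ball `B = B(x₀, ρ) ⊆ ℝ^{d-1}`. -/
def flatCyl (d : ℕ) (x₀ : Euc (d - 1)) (ρ h : ℝ) : Set (Pt d) :=
  { p | fstPt d p ∈ Metric.ball x₀ ρ ∧ sndPt d p ∈ Set.Ioo (-h) h }

/-- The identification `ℝ^{d-1} × ℝ ≃ Pt d` as a continuous linear equivalence. -/
def Scle (d : ℕ) : (Euc (d - 1) × ℝ) ≃L[ℝ] Pt d :=
  (WithLp.prodContinuousLinearEquiv 2 ℝ (Euc (d - 1)) ℝ).symm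

/-- The identification `ℝ^{d-1} × ℝ ≃ Pt d` as a measurable equivalence. -/
def Tmeq (d : ℕ) : (Euc (d - 1) × ℝ) ≃ᵐ Pt d :=
  (Scle d).toHomeomorph.toMeasurableEquiv

/-- 1D version of the Poincaré inequality on a slice. -/
lemma poincare_slice {h : ℝ} (hh : 0 < h) {φ φ' G : ℝ → ℝ}
    (hd : ∀ t ∈ Icc (-h) h, HasDerivAt φ (φ' t) t)
    (hφc : ContinuousOn φ (Icc (-h) h)) (hφ'c : ContinuousOn φ' (Icc (-h) h))
    (hGc : ContinuousOn G (Icc (-h) h))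
    (hbd : ∀ t ∈ Icc (-h) h, |φ' t| ≤ G t) :
    ∫ t in Ioo (-h) h, φ t ^ 2 ≤
      4 * h * φ h ^ 2 + 16 * h ^ 2 * ∫ t in Ioo (-h) h, G t ^ 2 := by
  have hhh : -h ≤ h := by linarith
  have hIccsub : ∀ t ∈ Icc (-h) h, Icc t h ⊆ Icc (-h) h := by
    intro t ht
    exact Icc_subset_Icc ht.1 le_rfl
  set F : ℝ → ℝ := fun s => 1 / (4 * h) * φ s ^ 2 + 4 * h * G s ^ 2 with hF
  have hFc : ContinuousOn F (Icc (-h) h) :=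
    (continuousOn_const.mul (hφc.pow 2)).add (continuousOn_const.mul (hGc.pow 2))
  have hFnonneg : ∀ s ∈ Icc (-h) h, 0 ≤ F s := by
    intro s hs
    have h1 : 0 ≤ φ s ^ 2 := sq_nonneg _
    have h2 : 0 ≤ G s ^ 2 := sq_nonneg _
    have h3 : 0 < 4 * h := by linarith
    positivity
  have hFint : IntervalIntegrable F volume (-h) h := by
    apply ContinuousOn.intervalIntegrable
    rwa [uIcc_of_le hhh]
  set I : ℝ := ∫ s in (-h)..h, F s with hI
  have key : ∀ t ∈ Icc (-h) h, φ t ^ 2 ≤ φ h ^ 2 + I := by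
    intro t ht
    have hsub : Icc t h ⊆ Icc (-h) h := hIccsub t ht
    have hsub' : uIcc t h ⊆ Icc (-h) h := by rw [uIcc_of_le ht.2]; exact hsub
    have hDc : ContinuousOn (fun s => (2:ℕ) * φ s ^ 1 * φ' s) (Icc t h) :=
      (continuousOn_const.mul ((hφc.mono hsub).pow 1)).mul (hφ'c.mono hsub)
    have hDint : IntervalIntegrable (fun s => (2:ℕ) * φ s ^ 1 * φ' s) volume t h := by
      apply ContinuousOn.intervalIntegrable
      rwa [uIcc_of_le ht.2]
    have hftc : ∫ s in t..h, (2:ℕ) * φ s ^ 1 * φ' s = φ h ^ 2 - φ t ^ 2 := by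
      apply intervalIntegral.integral_eq_sub_of_hasDerivAt
      · intro s hs
        exact (hd s (hsub' hs)).pow 2
      · exact hDint
    have hmono : ∫ s in t..h, -((2:ℕ) * φ s ^ 1 * φ' s) ≤ ∫ s in t..h, F s := by
      apply intervalIntegral.integral_mono_on ht.2 hDint.neg
        (hFint.mono_set (by rw [uIcc_of_le ht.2, uIcc_of_le hhh]; exact hsub))
      intro s hs
      have hsI : s ∈ Icc (-h) h := hsub hs
      have hb := hbd s hsI
      have hb2 : φ' s ^ 2 ≤ G s ^ 2 := by
        nlinarith [sq_abs (φ' s), abs_nonneg (φ' s)]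
      have h4 : (0:ℝ) < 4 * h := by linarith
      have hkey : -((2:ℝ) * φ s ^ 1 * φ' s) * (4 * h) ≤ F s * (4 * h) := by
        have e : F s * (4 * h) = φ s ^ 2 + 16 * h ^ 2 * G s ^ 2 := by
          simp only [hF]; field_simp; ring
        rw [e]
        have e2 : -((2:ℝ) * φ s ^ 1 * φ' s) * (4 * h) = -(8 * h * (φ s * φ' s)) := by ring
        rw [e2]
        nlinarith [sq_nonneg (φ s + 4 * h * φ' s), hb2, sq_nonneg h,
          mul_le_mul_of_nonneg_left hb2 (by positivity : (0:ℝ) ≤ 16 * h ^ 2)]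
      have := le_of_mul_le_mul_right hkey h4
      simpa using this
    have hext : ∫ s in t..h, F s ≤ I := by
      rw [hI]
      apply intervalIntegral.integral_mono_interval ht.1 ht.2 le_rfl
      · filter_upwards [ae_restrict_mem measurableSet_Ioc] with s hs
        exact hFnonneg s ⟨le_of_lt hs.1, hs.2⟩
      · exact hFint
    rw [intervalIntegral.integral_neg, hftc] at hmono
    linarith
  have hφ2int : IntegrableOn (fun t => φ t ^ 2) (Ioo (-h) h) volume :=
    ((hφc.pow 2).integrableOn_compact isCompact_Icc).mono_set Ioo_subset_Icc_self
  have hG2int : IntegrableOn (fun t => G t ^ 2) (Ioo (-h) h) volume :=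
    ((hGc.pow 2).integrableOn_compact isCompact_Icc).mono_set Ioo_subset_Icc_self
  have hAle : ∫ t in Ioo (-h) h, φ t ^ 2 ≤ ∫ t in Ioo (-h) h, (φ h ^ 2 + I) := by
    apply setIntegral_mono_on hφ2int (integrableOn_const (by
      rw [Real.volume_Ioo]; exact ENNReal.ofReal_ne_top)) measurableSet_Ioo
    intro t ht
    exact key t ⟨le_of_lt ht.1, le_of_lt ht.2⟩
  rw [setIntegral_const, smul_eq_mul] at hAle
  have hvol : (volume (Ioo (-h) h)).toReal = 2 * h := by
    rw [Real.volume_Ioo, ENNReal.toReal_ofReal (by linarith)]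
    ring
  rw [measureReal_def, hvol] at hAle
  have hIeq : I = 1 / (4 * h) * (∫ t in Ioo (-h) h, φ t ^ 2)
      + 4 * h * ∫ t in Ioo (-h) h, G t ^ 2 := by
    rw [hI, intervalIntegral.integral_of_le hhh, integral_Ioc_eq_integral_Ioo]
    have : ∫ t in Ioo (-h) h, F t =
        ∫ t in Ioo (-h) h, (1 / (4 * h) * φ t ^ 2 + 4 * h * G t ^ 2) := rfl
    rw [this, MeasureTheory.integral_add (hφ2int.const_mul _) (hG2int.const_mul _),
      MeasureTheory.integral_const_mul, MeasureTheory.integral_const_mul]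
  rw [hIeq] at hAle
  set A := ∫ t in Ioo (-h) h, φ t ^ 2
  set B := ∫ t in Ioo (-h) h, G t ^ 2
  have hsimp : 2 * h * (φ h ^ 2 + (1 / (4 * h) * A + 4 * h * B))
      = 2 * h * φ h ^ 2 + A / 2 + 8 * h ^ 2 * B := by
    field_simp
    ring
  rw [hsimp] at hAle
  linarith

/-- Poincaré-type inequality on flat cylinders: there is `C > 0`,
depending only on the ball `B` and `d`, such that for every half-height `h > 0` and every
`v` of class `C¹` on a neighborhood of the closed cylinder `B × [-h, h]`,
`C ∫_{C_h} v² ≤ h² ∫_{C_h} |∇v|² + h ∫_B v(·, h)²`. -/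
theorem poincare_flat_cylinder
    (d : ℕ) (hd : 2 ≤ d) (x₀ : Euc (d - 1)) (ρ : ℝ) (hρ : 0 < ρ) :
    ∃ C > 0, ∀ h : ℝ, 0 < h → ∀ v : Pt d → ℝ,
      (∃ U : Set (Pt d), IsOpen U ∧ closure (flatCyl d x₀ ρ h) ⊆ U ∧ ContDiffOn ℝ 1 v U) →
      C * ∫ p in flatCyl d x₀ ρ h, (v p) ^ 2 ∂(lebPt d) ≤
        h ^ 2 * ∫ p in flatCyl d x₀ ρ h, ‖gradient v p‖ ^ 2 ∂(lebPt d)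
          + h * ∫ z in Metric.ball x₀ ρ, (v (toPt d z h)) ^ 2 := by
  refine ⟨1/16, by norm_num, ?_⟩
  rintro h hh v ⟨U, hU, hclU, hv⟩
  set S : (Euc (d - 1) × ℝ) ≃L[ℝ] Pt d := Scle d with hSdef
  -- transport of the two integrals over the cylinder
  have hmap : lebPt d = Measure.map (Tmeq d) volume := rfl
  have htrans : ∀ f : Pt d → ℝ, ∫ p in flatCyl d x₀ ρ h, f p ∂(lebPt d) =
      ∫ q in ball x₀ ρ ×ˢ Ioo (-h) h, f (S q) := by
    intro f
    rw [hmap, setIntegral_map_equiv]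
    rfl
  -- geometry: the compact closed cylinder is inside the preimage of U
  have hVopen : IsOpen ((⇑S) ⁻¹' U) := hU.preimage S.continuous
  set V : Set (Euc (d - 1) × ℝ) := (⇑S) ⁻¹' U with hVdef
  have hKV : closedBall x₀ ρ ×ˢ Icc (-h) h ⊆ V := by
    have hpre : (⇑S) ⁻¹' flatCyl d x₀ ρ h = ball x₀ ρ ×ˢ Ioo (-h) h := rfl
    have hK1 : closedBall x₀ ρ ×ˢ Icc (-h) h = closure (ball x₀ ρ ×ˢ Ioo (-h) h) := by
      rw [closure_prod_eq, closure_ball x₀ hρ.ne', closure_Ioo (by linarith : -h ≠ h)]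
    have hcl : closure ((⇑S) ⁻¹' flatCyl d x₀ ρ h) = (⇑S) ⁻¹' closure (flatCyl d x₀ ρ h) :=
      (S.toHomeomorph.preimage_closure _).symm
    rw [hK1, ← hpre, hcl]
    exact preimage_mono hclU
  -- continuity facts
  have hvC : ContinuousOn v U := hv.continuousOn
  have hgC : ContinuousOn (fun q => v (S q)) V :=
    hvC.comp S.continuous.continuousOn (fun q hq => hq)
  have hfC : ContinuousOn (fderiv ℝ v) U := hv.continuousOn_fderiv_of_isOpen hU le_rfl
  have hgradC : ContinuousOn (fun p => gradient v p) U := by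
    have : (fun p => gradient v p) =
        fun p => (InnerProductSpace.toDual ℝ (Pt d)).symm (fderiv ℝ v p) := rfl
    rw [this]
    exact (InnerProductSpace.toDual ℝ (Pt d)).symm.continuous.comp_continuousOn hfC
  have hGradC : ContinuousOn (fun q => ‖gradient v (S q)‖) V :=
    continuous_norm.comp_continuousOn
      (hgradC.comp S.continuous.continuousOn (fun q hq => hq))
  -- the vertical unit vector
  set e1 : Pt d := S ((0 : Euc (d - 1)), (1 : ℝ)) with he1
  have hne1 : ‖e1‖ = 1 := by
    rw [he1, WithLp.prod_norm_eq_of_L2]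
    have h1 : (S ((0 : Euc (d - 1)), (1 : ℝ))).fst = (0 : Euc (d - 1)) := rfl
    have h2 : (S ((0 : Euc (d - 1)), (1 : ℝ))).snd = (1 : ℝ) := rfl
    rw [h1, h2]
    norm_num
  -- derivative of vertical slices
  have hDeriv : ∀ x : Euc (d - 1), ∀ t : ℝ, (x, t) ∈ V →
      HasDerivAt (fun s => v (S (x, s))) ((fderiv ℝ v (S (x, t))) e1) t := by
    intro x t hxt
    have hdv : DifferentiableAt ℝ v (S (x, t)) :=
      (hv.differentiableOn one_ne_zero).differentiableAt (hU.mem_nhds hxt)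
    have h1 : HasDerivAt (fun s : ℝ => ((x, s) : Euc (d - 1) × ℝ))
        ((0 : Euc (d - 1)), (1 : ℝ)) t := (hasDerivAt_const t x).prodMk (hasDerivAt_id t)
    haveI : ContinuousSMul ℝ (Pt d) :=
      letI : IsBoundedSMul ℝ (Pt d) := NormedSpace.toIsBoundedSMul; IsBoundedSMul.continuousSMul
    have hline : HasDerivAt (fun s : ℝ => S (x, s)) e1 t := by
      have := ((S : (Euc (d - 1) × ℝ) →L[ℝ] Pt d).hasFDerivAt).comp_hasDerivAt t h1
      exact this
    exact hdv.hasFDerivAt.comp_hasDerivAt t hline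
  -- gradient bound on vertical derivative
  have hfg : ∀ p : Pt d, |(fderiv ℝ v p) e1| ≤ ‖gradient v p‖ := by
    intro p
    have hinner : (fderiv ℝ v p) e1 = inner ℝ (gradient v p) e1 := by
      rw [gradient, InnerProductSpace.toDual_symm_apply]
    rw [hinner]
    calc |inner ℝ (gradient v p) e1| ≤ ‖gradient v p‖ * ‖e1‖ := abs_real_inner_le_norm _ _
      _ = ‖gradient v p‖ := by rw [hne1, mul_one]
  -- slice estimate
  have hslice : ∀ x ∈ ball x₀ ρ,
      ∫ t in Ioo (-h) h, (v (S (x, t))) ^ 2 ≤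
        4 * h * (v (S (x, h))) ^ 2 +
          16 * h ^ 2 * ∫ t in Ioo (-h) h, ‖gradient v (S (x, t))‖ ^ 2 := by
    intro x hx
    have hxseg : ∀ t ∈ Icc (-h) h, ((x, t) : Euc (d - 1) × ℝ) ∈ V := fun t ht =>
      hKV ⟨ball_subset_closedBall hx, ht⟩
    have hcont_line : Continuous (fun t : ℝ => ((x, t) : Euc (d - 1) × ℝ)) :=
      continuous_const.prodMk continuous_id
    apply poincare_slice hh (φ' := fun t => (fderiv ℝ v (S (x, t))) e1)
    · intro t ht
      exact hDeriv x t (hxseg t ht)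
    · exact hgC.comp hcont_line.continuousOn hxseg
    · exact (ContinuousLinearMap.apply ℝ ℝ e1).continuous.comp_continuousOn
        ((hfC.comp (S.continuous.comp hcont_line).continuousOn hxseg))
    · exact hGradC.comp hcont_line.continuousOn hxseg
    · intro t ht
      exact hfg (S (x, t))
  -- integrability on the cylinder
  have hKcomp : IsCompact (closedBall x₀ ρ ×ˢ Icc (-h) h) :=
    (isCompact_closedBall _ _).prod isCompact_Icc
  have hsubK : ball x₀ ρ ×ˢ Ioo (-h) h ⊆ closedBall x₀ ρ ×ˢ Icc (-h) h :=
    prod_mono ball_subset_closedBall Ioo_subset_Icc_self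
  have hint1 : IntegrableOn (fun q => (v (S q)) ^ 2) (ball x₀ ρ ×ˢ Ioo (-h) h) volume :=
    (((hgC.mono hKV).pow 2).integrableOn_compact hKcomp).mono_set hsubK
  have hint2 : IntegrableOn (fun q => ‖gradient v (S q)‖ ^ 2) (ball x₀ ρ ×ˢ Ioo (-h) h) volume :=
    (((hGradC.mono hKV).pow 2).integrableOn_compact hKcomp).mono_set hsubK
  -- top face integrand
  have htopc : ContinuousOn (fun z => v (S (z, h))) (closedBall x₀ ρ) := by
    apply hgC.comp (continuous_id.prodMk continuous_const).continuousOn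
    intro z hz
    exact hKV ⟨hz, ⟨by linarith, le_rfl⟩⟩
  have hPint : IntegrableOn (fun z => (v (S (z, h))) ^ 2) (ball x₀ ρ) volume :=
    ((htopc.pow 2).integrableOn_compact (isCompact_closedBall _ _)).mono_set
      ball_subset_closedBall
  -- Fubini
  have hint1' : Integrable (fun q => (v (S q)) ^ 2)
      ((volume.restrict (ball x₀ ρ)).prod (volume.restrict (Ioo (-h) h))) := by
    rw [Measure.prod_restrict, ← Measure.volume_eq_prod]
    exact hint1
  have hint2' : Integrable (fun q => ‖gradient v (S q)‖ ^ 2)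
      ((volume.restrict (ball x₀ ρ)).prod (volume.restrict (Ioo (-h) h))) := by
    rw [Measure.prod_restrict, ← Measure.volume_eq_prod]
    exact hint2
  have hAint : IntegrableOn (fun x => ∫ t in Ioo (-h) h, (v (S (x, t))) ^ 2)
      (ball x₀ ρ) volume := hint1'.integral_prod_left
  have hBint : IntegrableOn (fun x => ∫ t in Ioo (-h) h, ‖gradient v (S (x, t))‖ ^ 2)
      (ball x₀ ρ) volume := hint2'.integral_prod_left
  have hFub1 : ∫ q in ball x₀ ρ ×ˢ Ioo (-h) h, (v (S q)) ^ 2 =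
      ∫ x in ball x₀ ρ, ∫ t in Ioo (-h) h, (v (S (x, t))) ^ 2 := by
    rw [Measure.volume_eq_prod]
    rw [Measure.volume_eq_prod] at hint1
    exact setIntegral_prod _ hint1
  have hFub2 : ∫ q in ball x₀ ρ ×ˢ Ioo (-h) h, ‖gradient v (S q)‖ ^ 2 =
      ∫ x in ball x₀ ρ, ∫ t in Ioo (-h) h, ‖gradient v (S (x, t))‖ ^ 2 := by
    rw [Measure.volume_eq_prod]
    rw [Measure.volume_eq_prod] at hint2
    exact setIntegral_prod _ hint2
  -- integrate the slice estimate over the ball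
  have hmain : ∫ x in ball x₀ ρ, ∫ t in Ioo (-h) h, (v (S (x, t))) ^ 2 ≤
      ∫ x in ball x₀ ρ, (4 * h * (v (S (x, h))) ^ 2 +
        16 * h ^ 2 * ∫ t in Ioo (-h) h, ‖gradient v (S (x, t))‖ ^ 2) := by
    apply setIntegral_mono_on hAint ((hPint.const_mul _).add (hBint.const_mul _))
      measurableSet_ball
    exact hslice
  rw [MeasureTheory.integral_add (hPint.const_mul _) (hBint.const_mul _),
    MeasureTheory.integral_const_mul, MeasureTheory.integral_const_mul] at hmain
  have hPnonneg : 0 ≤ ∫ z in ball x₀ ρ, (v (S (z, h))) ^ 2 :=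
    setIntegral_nonneg measurableSet_ball (fun z _ => sq_nonneg _)
  -- assemble
  rw [htrans (fun p => v p ^ 2), htrans (fun p => ‖gradient v p‖ ^ 2)]
  have htop : (∫ z in ball x₀ ρ, (v (toPt d z h)) ^ 2) =
      ∫ z in ball x₀ ρ, (v (S (z, h))) ^ 2 := rfl
  rw [htop, hFub1, hFub2]
  linarith [mul_nonneg hh.le hPnonneg]
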